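/- Let f : ℝ^d → ℝ be M-strongly convex with ρ-Lipschitz Hessian (in Frobenius norm), minimized at x* with minimum value f*. Fix x_B ∈ ℝ^d, let x̃ = x_B − (∇²f(x_B))^{−1}∇f(x_B), and let f̃(x) = ½(x − x̃)ᵀ ∇²f(x_B) (x − x̃). Then for every x with ‖x − x_B‖₂ ≤ M/ρ: f(x) − f* ≤ 2·f̃(x) + 12·ρ·(f(x_B) − f*)^{3/2}/M^{3/2}. -/

import Mathlib

open scoped RealInnerProductSpace

/-- Frobenius norm of a continuous linear operator on `EuclideanSpace ℝ (Fin d)`,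
computed in the standard orthonormal basis. -/
noncomputable def frobNorm {d : ℕ}
    (A : EuclideanSpace ℝ (Fin d) →L[ℝ] EuclideanSpace ℝ (Fin d)) : ℝ :=
  Real.sqrt (∑ i, ∑ j, (A (EuclideanSpace.single j 1) i) ^ 2)

namespace Stmt16Aux

abbrev Euc (d : ℕ) := EuclideanSpace ℝ (Fin d)

lemma apply_le_frobNorm_mul {d : ℕ} (A : Euc d →L[ℝ] Euc d) (v : Euc d) :
    ‖A v‖ ≤ frobNorm A * ‖v‖ := by
  have hv : v = ∑ j, v j • EuclideanSpace.single j (1:ℝ) := by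
    ext i
    rw [WithLp.ofLp_sum, Finset.sum_apply]
    simp [EuclideanSpace.single_apply]
  have h1 : A v = ∑ j, v j • A (EuclideanSpace.single j (1:ℝ)) := by
    conv_lhs => rw [hv]
    simp [map_sum]
  have h2 : ‖A v‖ ≤ ∑ j, |v j| * ‖A (EuclideanSpace.single j (1:ℝ))‖ := by
    rw [h1]
    refine (norm_sum_le _ _).trans ?_
    simp [norm_smul]
  have hCS := Finset.sum_mul_sq_le_sq_mul_sq Finset.univ (fun j => |v j|)
      (fun j => ‖A (EuclideanSpace.single j (1:ℝ))‖)
  have hfrob : frobNorm A = Real.sqrt (∑ j, ‖A (EuclideanSpace.single j (1:ℝ))‖^2) := by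
    rw [frobNorm, Finset.sum_comm]
    congr 1
    refine Finset.sum_congr rfl fun j _ => ?_
    rw [EuclideanSpace.norm_eq, Real.sq_sqrt (by positivity)]
    simp [sq_abs]
  have hnv : ‖v‖ = Real.sqrt (∑ j, (v j)^2) := by
    rw [EuclideanSpace.norm_eq]; simp [sq_abs]
  refine h2.trans ?_
  rw [hfrob, hnv]
  have h3 : (∑ j, |v j| * ‖A (EuclideanSpace.single j (1:ℝ))‖) ^2 ≤
      (∑ j, (v j)^2) * (∑ j, ‖A (EuclideanSpace.single j (1:ℝ))‖^2) := by
    simpa [sq_abs] using hCS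
  have hs : (0:ℝ) ≤ ∑ j, |v j| * ‖A (EuclideanSpace.single j (1:ℝ))‖ :=
    Finset.sum_nonneg fun j _ => by positivity
  calc ∑ j, |v j| * ‖A (EuclideanSpace.single j (1:ℝ))‖
      = Real.sqrt ((∑ j, |v j| * ‖A (EuclideanSpace.single j (1:ℝ))‖)^2) :=
        (Real.sqrt_sq hs).symm
    _ ≤ Real.sqrt ((∑ j, (v j)^2) * (∑ j, ‖A (EuclideanSpace.single j (1:ℝ))‖^2)) :=
        Real.sqrt_le_sqrt h3
    _ = Real.sqrt (∑ j, ‖A (EuclideanSpace.single j (1:ℝ))‖^2) * Real.sqrt (∑ j, (v j)^2) := by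
        rw [Real.sqrt_mul (by positivity), mul_comm]

lemma opNorm_le_frobNorm {d : ℕ} (A : Euc d →L[ℝ] Euc d) : ‖A‖ ≤ frobNorm A :=
  ContinuousLinearMap.opNorm_le_bound _
    (Real.sqrt_nonneg _)
    (apply_le_frobNorm_mul A)

section calc1
variable {d : ℕ} {f : Euc d → ℝ} (hf : ContDiff ℝ 2 f)
include hf

lemma contDiff_gradient : ContDiff ℝ 1 (gradient f) := by
  have h1 : ContDiff ℝ 1 (fderiv ℝ f) := hf.fderiv_right (le_refl _)
  exact ((InnerProductSpace.toDual ℝ (Euc d)).symm.contDiff).comp h1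

lemma hasFDerivAt_gradient (x : Euc d) :
    HasFDerivAt (gradient f) (fderiv ℝ (gradient f) x) x :=
  (((contDiff_gradient hf).differentiable (by norm_num)) x).hasFDerivAt

lemma continuous_Hf : Continuous (fun x : Euc d => fderiv ℝ (gradient f) x) :=
  (contDiff_gradient hf).continuous_fderiv (by norm_num)

omit hf in
lemma inner_gradient (x w : Euc d) : ⟪gradient f x, w⟫ = fderiv ℝ f x w :=
  InnerProductSpace.toDual_symm_apply

lemma hessian_symm (x v w : Euc d) :
    ⟪v, fderiv ℝ (gradient f) x w⟫ = ⟪w, fderiv ℝ (gradient f) x v⟫ := by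
  have hdf : Differentiable ℝ (fderiv ℝ f) :=
    (hf.fderiv_right (m := 1) (le_refl _)).differentiable (by norm_num)
  set A := fderiv ℝ (gradient f) x with hA
  set B := fderiv ℝ (fderiv ℝ f) x with hB
  have hsym := second_derivative_symmetric (f := f) (f' := fderiv ℝ f)
    (f'' := B) (x := x)
    (fun y => ((hf.differentiable (by norm_num)) y).hasFDerivAt) (hdf x).hasFDerivAt
  have key : ∀ u : Euc d, ∀ w' : Euc d, ⟪w', A u⟫ = B u w' := by
    intro u w'
    let c := (InnerProductSpace.toDual ℝ (Euc d)) w'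
    have hφa : HasFDerivAt (fun y => fderiv ℝ f y w') (c.comp A) x := by
      have heq : (fun y => fderiv ℝ f y w') = fun y => c (gradient f y) := by
        funext y
        show fderiv ℝ f y w' = ⟪w', gradient f y⟫
        rw [real_inner_comm, inner_gradient]
      rw [heq]
      exact c.hasFDerivAt.comp x (hasFDerivAt_gradient hf x)
    have hφb : HasFDerivAt (fun y => fderiv ℝ f y w')
        ((ContinuousLinearMap.apply ℝ ℝ w').comp B) x :=
      (ContinuousLinearMap.apply ℝ ℝ w').hasFDerivAt.comp x (hdf x).hasFDerivAt
    have huniq := hφa.unique hφb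
    calc ⟪w', A u⟫ = (c.comp A) u := rfl
      _ = ((ContinuousLinearMap.apply ℝ ℝ w').comp B) u := by rw [huniq]
      _ = B u w' := rfl
  calc ⟪v, A w⟫ = B w v := key w v
    _ = B v w := (hsym v w).symm
    _ = ⟪w, A v⟫ := (key v w).symm

omit hf in
lemma line_hasDerivAt (z w : Euc d) (t : ℝ) :
    HasDerivAt (fun s : ℝ => z + s • w) w t := by
  simpa using ((hasDerivAt_id t).smul_const w).const_add z

lemma grad_line (z w : Euc d) (t : ℝ) :
    HasDerivAt (fun s : ℝ => gradient f (z + s • w))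
      (fderiv ℝ (gradient f) (z + t • w) w) t := by
  have := (hasFDerivAt_gradient hf (z + t • w)).comp_hasDerivAt t (line_hasDerivAt z w t)
  exact this

lemma f_line (z w : Euc d) (t : ℝ) :
    HasDerivAt (fun s : ℝ => f (z + s • w)) ⟪gradient f (z + t • w), w⟫ t := by
  have h := ((hf.differentiable (by norm_num)) (z + t • w)).hasFDerivAt.comp_hasDerivAt
    t (line_hasDerivAt z w t)
  rw [show (⟪gradient f (z + t • w), w⟫:ℝ) = fderiv ℝ f (z + t • w) w from inner_gradient _ _]
  exact h

lemma grad_continuous_line (z w : Euc d) :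
    Continuous (fun t : ℝ => gradient f (z + t • w)) :=
  ((contDiff_gradient hf).continuous).comp (by continuity)

lemma Hf_w_continuous_line (z w v : Euc d) :
    Continuous (fun t : ℝ => fderiv ℝ (gradient f) (z + t • w) v) := by
  have h1 : Continuous (fun t : ℝ => fderiv ℝ (gradient f) (z + t • w)) :=
    (continuous_Hf hf).comp (by continuity)
  exact (ContinuousLinearMap.apply ℝ (Euc d) v).continuous.comp h1

/-- Taylor bound for the gradient. -/
lemma grad_taylor {ρ : ℝ} (hρ : 0 ≤ ρ)
    (hLip' : ∀ x x' : Euc d, ‖fderiv ℝ (gradient f) x - fderiv ℝ (gradient f) x'‖ ≤ ρ * ‖x - x'‖)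
    (a w : Euc d) :
    ‖gradient f (a + w) - gradient f a - fderiv ℝ (gradient f) a w‖ ≤ ρ/2 * ‖w‖^2 := by
  have hψ : ∀ t : ℝ, HasDerivAt (fun s : ℝ => gradient f (a + s • w) - s • (fderiv ℝ (gradient f) a w))
      (fderiv ℝ (gradient f) (a + t • w) w - fderiv ℝ (gradient f) a w) t := by
    intro t
    have h2 : HasDerivAt (fun s : ℝ => s • (fderiv ℝ (gradient f) a w))
        (fderiv ℝ (gradient f) a w) t := by
      simpa using (hasDerivAt_id t).smul_const (fderiv ℝ (gradient f) a w)
    exact (grad_line hf a w t).sub h2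
  have hcont : Continuous (fun t : ℝ => fderiv ℝ (gradient f) (a + t • w) w - fderiv ℝ (gradient f) a w) :=
    (Hf_w_continuous_line hf a w w).sub continuous_const
  have hFTC := intervalIntegral.integral_eq_sub_of_hasDerivAt (f := fun s : ℝ => gradient f (a + s • w) - s • (fderiv ℝ (gradient f) a w))
    (fun t _ => hψ t) (hcont.intervalIntegrable 0 1)
  have hval : (∫ t in (0:ℝ)..1, (fderiv ℝ (gradient f) (a + t • w) w - fderiv ℝ (gradient f) a w))
      = gradient f (a + w) - gradient f a - fderiv ℝ (gradient f) a w := by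
    rw [hFTC]; simp; abel
  have hbound : ∀ t ∈ Set.uIoc (0:ℝ) 1,
      ‖fderiv ℝ (gradient f) (a + t • w) w - fderiv ℝ (gradient f) a w‖ ≤ ρ * ‖w‖^2 * t := by
    intro t ht
    rw [Set.uIoc_of_le zero_le_one] at ht
    have h1 : fderiv ℝ (gradient f) (a + t • w) w - fderiv ℝ (gradient f) a w
        = (fderiv ℝ (gradient f) (a + t • w) - fderiv ℝ (gradient f) a) w := by
      rw [ContinuousLinearMap.sub_apply]
    rw [h1]
    calc ‖(fderiv ℝ (gradient f) (a + t • w) - fderiv ℝ (gradient f) a) w‖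
        ≤ ‖fderiv ℝ (gradient f) (a + t • w) - fderiv ℝ (gradient f) a‖ * ‖w‖ :=
          ContinuousLinearMap.le_opNorm _ _
      _ ≤ ρ * ‖a + t • w - a‖ * ‖w‖ :=
          mul_le_mul_of_nonneg_right (hLip' _ _) (norm_nonneg w)
      _ = ρ * ‖w‖^2 * t := by
          rw [show a + t • w - a = t • w by abel, norm_smul]
          rw [Real.norm_eq_abs, abs_of_pos ht.1]
          ring
  have hint2 : IntervalIntegrable (fun t : ℝ => ρ * ‖w‖^2 * t) MeasureTheory.volume 0 1 :=
    ((continuous_const.mul continuous_id) : Continuous fun t : ℝ => ρ * ‖w‖^2 * t).intervalIntegrable 0 1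
  have hIoc : Set.uIoc (0:ℝ) 1 = Set.Ioc 0 1 := Set.uIoc_of_le zero_le_one
  have hae : ∀ᵐ t ∂(MeasureTheory.volume.restrict (Set.uIoc (0:ℝ) 1)),
      ‖fderiv ℝ (gradient f) (a + t • w) w - fderiv ℝ (gradient f) a w‖ ≤ ρ * ‖w‖^2 * t := by
    rw [hIoc]
    exact MeasureTheory.ae_restrict_of_forall_mem measurableSet_Ioc
      (fun t ht => hbound t (by rwa [hIoc]))
  have hle := intervalIntegral.norm_integral_le_abs_of_norm_le hae hint2
  rw [hval] at hle
  refine hle.trans (le_of_eq ?_)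
  rw [intervalIntegral.integral_const_mul, integral_id]
  rw [abs_of_nonneg (by positivity)]
  ring

/-- Two-sided second order Taylor estimate. -/
lemma f_taylor {ρ : ℝ} (hρ : 0 ≤ ρ)
    (hLip' : ∀ x x' : Euc d, ‖fderiv ℝ (gradient f) x - fderiv ℝ (gradient f) x'‖ ≤ ρ * ‖x - x'‖)
    (a w : Euc d) :
    |f (a + w) - f a - ⟪gradient f a, w⟫ - 1/2 * ⟪w, fderiv ℝ (gradient f) a w⟫|
      ≤ ρ/6 * ‖w‖^3 := by
  set e : ℝ → ℝ := fun t =>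
    ⟪gradient f (a + t • w) - gradient f a - t • (fderiv ℝ (gradient f) a w), w⟫ with he
  have hΦ : ∀ t : ℝ, HasDerivAt (fun s : ℝ => f (a + s • w) - s * ⟪gradient f a, w⟫
      - s^2/2 * ⟪w, fderiv ℝ (gradient f) a w⟫) (e t) t := by
    intro t
    have h1 := f_line hf a w t
    have h2 : HasDerivAt (fun s : ℝ => s * ⟪gradient f a, w⟫) ⟪gradient f a, w⟫ t := by
      simpa using (hasDerivAt_id t).mul_const (⟪gradient f a, w⟫ : ℝ)
    have h3 : HasDerivAt (fun s : ℝ => s^2/2 * ⟪w, fderiv ℝ (gradient f) a w⟫)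
        (t * ⟪w, fderiv ℝ (gradient f) a w⟫) t := by
      have := (((hasDerivAt_id t).pow 2).div_const 2).mul_const
        (⟪w, fderiv ℝ (gradient f) a w⟫ : ℝ)
      simpa [mul_comm, mul_assoc, mul_div_assoc] using this
    have h4 := (h1.sub h2).sub h3
    convert h4 using 1
    case e'_4 => rfl
    case e'_5 => rfl
    case e'_8 => rfl
    rw [he]
    simp only [inner_sub_left, real_inner_smul_left]
    rw [real_inner_comm w (fderiv ℝ (gradient f) a w)]
  have hcont : Continuous e := by
    apply Continuous.inner
    · exact ((grad_continuous_line hf a w).sub continuous_const).sub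
        (continuous_id.smul continuous_const)
    · exact continuous_const
  have hFTC := intervalIntegral.integral_eq_sub_of_hasDerivAt (a := (0:ℝ)) (b := 1)
    (fun t _ => hΦ t) (hcont.intervalIntegrable 0 1)
  have hval : (∫ t in (0:ℝ)..1, e t)
      = f (a + w) - f a - ⟪gradient f a, w⟫ - 1/2 * ⟪w, fderiv ℝ (gradient f) a w⟫ := by
    rw [hFTC]; simp; ring
  have hbound : ∀ t ∈ Set.Ioc (0:ℝ) 1, |e t| ≤ ρ/2 * ‖w‖^3 * t^2 := by
    intro t ht
    have h5 : gradient f (a + t • w) - gradient f a - t • (fderiv ℝ (gradient f) a w)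
        = gradient f (a + t • w) - gradient f a - fderiv ℝ (gradient f) a (t • w) := by
      rw [map_smul]
    calc |e t| ≤ ‖gradient f (a + t • w) - gradient f a - t • (fderiv ℝ (gradient f) a w)‖ * ‖w‖ :=
          abs_real_inner_le_norm _ _
      _ ≤ (ρ/2 * ‖t • w‖^2) * ‖w‖ := by
          apply mul_le_mul_of_nonneg_right _ (norm_nonneg w)
          rw [h5]
          exact grad_taylor hf hρ hLip' a (t • w)
      _ = ρ/2 * ‖w‖^3 * t^2 := by
          rw [norm_smul, Real.norm_eq_abs, abs_of_pos ht.1]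
          ring
  have hint2 : IntervalIntegrable (fun t : ℝ => ρ/2 * ‖w‖^3 * t^2) MeasureTheory.volume 0 1 :=
    ((continuous_const.mul (continuous_pow 2)) :
      Continuous fun t : ℝ => ρ/2 * ‖w‖^3 * t^2).intervalIntegrable 0 1
  have hIoc : Set.uIoc (0:ℝ) 1 = Set.Ioc 0 1 := Set.uIoc_of_le zero_le_one
  have hae : ∀ᵐ t ∂(MeasureTheory.volume.restrict (Set.uIoc (0:ℝ) 1)),
      ‖e t‖ ≤ ρ/2 * ‖w‖^3 * t^2 := by
    rw [hIoc]
    exact MeasureTheory.ae_restrict_of_forall_mem measurableSet_Ioc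
      (fun t ht => hbound t ht)
  have hle := intervalIntegral.norm_integral_le_abs_of_norm_le hae hint2
  rw [hval] at hle
  refine le_trans hle (le_of_eq ?_)
  rw [intervalIntegral.integral_const_mul, integral_pow]
  rw [abs_of_nonneg (by positivity)]
  ring

/-- Monotonicity of the gradient under strong convexity. -/
lemma grad_mono {M : ℝ}
    (hsc' : ∀ x v : Euc d, M * ‖v‖^2 ≤ ⟪v, fderiv ℝ (gradient f) x v⟫) (a w : Euc d) :
    M * ‖w‖^2 ≤ ⟪gradient f (a + w) - gradient f a, w⟫ := by
  set ψ : ℝ → ℝ := fun t => ⟪w, gradient f (a + t • w)⟫ with hψdef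
  have hψ : ∀ t : ℝ, HasDerivAt ψ ⟪w, fderiv ℝ (gradient f) (a + t • w) w⟫ t := by
    intro t
    let c := (InnerProductSpace.toDual ℝ (Euc d)) w
    exact (c.hasFDerivAt.comp_hasDerivAt t (grad_line hf a w t) : _)
  have hcont : Continuous fun t : ℝ => ⟪w, fderiv ℝ (gradient f) (a + t • w) w⟫ :=
    Continuous.inner continuous_const (Hf_w_continuous_line hf a w w)
  have hFTC := intervalIntegral.integral_eq_sub_of_hasDerivAt (a := (0:ℝ)) (b := 1)
    (fun t _ => hψ t) (hcont.intervalIntegrable 0 1)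
  have hmono : (∫ t in (0:ℝ)..1, (M * ‖w‖^2 : ℝ))
      ≤ ∫ t in (0:ℝ)..1, ⟪w, fderiv ℝ (gradient f) (a + t • w) w⟫ := by
    apply intervalIntegral.integral_mono_on zero_le_one
      (intervalIntegrable_const) (hcont.intervalIntegrable 0 1)
    intro t _
    exact hsc' _ w
  rw [hFTC] at hmono
  simp only [intervalIntegral.integral_const, smul_eq_mul, sub_zero, one_mul] at hmono
  have heq : ψ 1 - ψ 0 = ⟪gradient f (a + w) - gradient f a, w⟫ := by
    rw [hψdef]
    simp only [one_smul, zero_smul, add_zero]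
    rw [inner_sub_left, real_inner_comm w (gradient f (a+w)), real_inner_comm w (gradient f a)]
  rw [heq] at hmono
  exact hmono

/-- Strong convexity lower bound. -/
lemma sc_lower {M : ℝ}
    (hsc' : ∀ x v : Euc d, M * ‖v‖^2 ≤ ⟪v, fderiv ℝ (gradient f) x v⟫) (a w : Euc d) :
    f a + ⟪gradient f a, w⟫ + M/2 * ‖w‖^2 ≤ f (a + w) := by
  have hφ : ∀ t : ℝ, HasDerivAt (fun s : ℝ => f (a + s • w)) ⟪gradient f (a + t • w), w⟫ t :=
    f_line hf a w
  have hcont : Continuous fun t : ℝ => ⟪gradient f (a + t • w), w⟫ :=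
    Continuous.inner (grad_continuous_line hf a w) continuous_const
  have hFTC := intervalIntegral.integral_eq_sub_of_hasDerivAt (a := (0:ℝ)) (b := 1)
    (fun t _ => hφ t) (hcont.intervalIntegrable 0 1)
  have hmono : (∫ t in (0:ℝ)..1, (⟪gradient f a, w⟫ + t * (M * ‖w‖^2) : ℝ))
      ≤ ∫ t in (0:ℝ)..1, ⟪gradient f (a + t • w), w⟫ := by
    apply intervalIntegral.integral_mono_on zero_le_one
      (((continuous_const.add (continuous_id.mul continuous_const)) :
        Continuous fun t : ℝ => (⟪gradient f a, w⟫ + t * (M * ‖w‖^2) : ℝ)).intervalIntegrable 0 1)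
      (hcont.intervalIntegrable 0 1)
    intro t ht
    rcases eq_or_lt_of_le ht.1 with h0 | h0
    · simp [← h0]
    · have h1 := grad_mono hf hsc' a (t • w)
      rw [inner_sub_left] at h1
      have h3 : (⟪gradient f (a + t • w), t • w⟫ : ℝ) = t * ⟪gradient f (a + t • w), w⟫ :=
        real_inner_smul_right _ _ _
      have h4 : (⟪gradient f a, t • w⟫ : ℝ) = t * ⟪gradient f a, w⟫ :=
        real_inner_smul_right _ _ _
      rw [norm_smul, Real.norm_eq_abs, abs_of_pos h0] at h1
      rw [h3, h4] at h1
      have h5 : M * (t * ‖w‖)^2 = t * (t * (M * ‖w‖^2)) := by ring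
      rw [h5] at h1
      have h6 : t * (t * (M * ‖w‖^2)) ≤ t * (⟪gradient f (a + t • w), w⟫ - ⟪gradient f a, w⟫) := by
        linarith
      have h7 := le_of_mul_le_mul_left h6 h0
      show (⟪gradient f a, w⟫ + t * (M * ‖w‖^2) : ℝ) ≤ _
      linarith
  rw [hFTC] at hmono
  have hlhs : (∫ t in (0:ℝ)..1, (⟪gradient f a, w⟫ + t * (M * ‖w‖^2) : ℝ))
      = ⟪gradient f a, w⟫ + M/2 * ‖w‖^2 := by
    have hi1 : IntervalIntegrable (fun _ : ℝ => (⟪gradient f a, w⟫ : ℝ))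
        MeasureTheory.volume 0 1 := intervalIntegrable_const
    have hi2 : IntervalIntegrable (fun t : ℝ => t * (M * ‖w‖^2)) MeasureTheory.volume 0 1 := by
      apply Continuous.intervalIntegrable
      fun_prop
    rw [intervalIntegral.integral_add hi1 hi2]
    simp only [intervalIntegral.integral_const, smul_eq_mul, sub_zero, one_mul]
    have h8 : (∫ t in (0:ℝ)..1, t * (M * ‖w‖^2)) = (M * ‖w‖^2) * ∫ t in (0:ℝ)..1, t := by
      rw [← intervalIntegral.integral_const_mul]
      congr 1
      funext t
      ring
    rw [h8, integral_id]
    ring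
  rw [hlhs] at hmono
  simp only [one_smul, zero_smul, add_zero] at hmono
  linarith
end calc1

/-- Cauchy–Schwarz for the positive symmetric bilinear form of the Hessian. -/
lemma hess_cs {d : ℕ} (H : Euc d →L[ℝ] Euc d) (M : ℝ) (hM : 0 < M)
    (hsc2 : ∀ v : Euc d, M * ‖v‖^2 ≤ ⟪v, H v⟫)
    (hsym : ∀ v w : Euc d, ⟪v, H w⟫ = ⟪w, H v⟫) (Δ sv : Euc d) :
    (⟪Δ, H sv⟫ : ℝ) ≤ ⟪Δ, H Δ⟫/2 + ⟪sv, H sv⟫/2 := by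
  set l : ℝ := ⟪Δ, H Δ⟫ with hldef
  set b2 : ℝ := ⟪sv, H sv⟫ with hb2def
  have hl0 : 0 ≤ l := le_trans (by positivity) (hsc2 Δ)
  have hb20 : 0 ≤ b2 := le_trans (by positivity) (hsc2 sv)
  have key : ∀ θ : ℝ, 0 ≤ l + 2*θ*⟪Δ, H sv⟫ + θ^2 * b2 := by
    intro θ
    have h1 : (0:ℝ) ≤ ⟪Δ + θ • sv, H (Δ + θ • sv)⟫ :=
      le_trans (by positivity : (0:ℝ) ≤ M * ‖Δ + θ • sv‖^2) (hsc2 _)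
    rw [map_add, map_smul, inner_add_left, inner_add_right, inner_add_right] at h1
    rw [real_inner_smul_left, real_inner_smul_left, real_inner_smul_right,
      real_inner_smul_right] at h1
    rw [hsym sv Δ] at h1
    nlinarith [h1]
  rcases eq_or_lt_of_le hb20 with h0 | hb2pos
  · have h1 := key 1
    have h2 := key (-1)
    nlinarith [h1, h2]
  · set c : ℝ := ⟪Δ, H sv⟫ with hcdef
    set θ : ℝ := -c / b2 with hθdef
    have hb2ne : b2 ≠ 0 := ne_of_gt hb2pos
    have hθb : θ * b2 = -c := by rw [hθdef]; field_simp
    have h5 : θ^2 * b2 = -(θ * c) := by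
      calc θ^2*b2 = θ*(θ*b2) := by ring
        _ = θ*(-c) := by rw [hθb]
        _ = -(θ*c) := by ring
    have hkey2 := key θ
    rw [h5] at hkey2
    have h7 : -(θ*c) ≤ l := by linarith
    have h8 : -(θ*c)*b2 = c^2 := by
      calc -(θ*c)*b2 = -((θ*b2)*c) := by ring
        _ = -((-c)*c) := by rw [hθb]
        _ = c^2 := by ring
    have hsq : c^2 ≤ l * b2 := by
      rw [← h8]
      exact mul_le_mul_of_nonneg_right h7 hb20
    nlinarith [hsq, sq_nonneg (l - b2), hl0, hb20]

set_option maxHeartbeats 1000000 in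
/-- The final scalar estimate. -/
lemma final_arith (M ρ r Q X s t l D ft fx fs : ℝ)
    (hM : 0 < M) (hρ : 0 < ρ)
    (hr0 : 0 ≤ r) (hQ0 : 0 ≤ Q) (hX0 : 0 ≤ X) (hs0 : 0 ≤ s) (ht0 : 0 ≤ t)
    (hMr : M * r^2 ≤ l) (hft : M/2 * Q^2 ≤ ft)
    (hmain : fx - fs ≤ D - l/2 + ft + ρ/6 * X^3)
    (hDl : D ≤ l/2 + ρ/6 * s^3)
    (hl2D : l ≤ 2*D + ρ/3 * r^3)
    (hseq : M * s^2 ≤ 2*D)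
    (htri1 : X ≤ Q + r) (htri2 : r ≤ Q + X)
    (hXb : X ≤ M / ρ)
    (hDt : D = M * t^2) :
    fx - fs ≤ 2 * ft + 12 * ρ * t^3 := by
  have hρ' : (0:ℝ) ≤ ρ := hρ.le
  have hft0 : 0 ≤ ft := le_trans (by positivity) hft
  have hst : s ≤ (71/50) * t := by
    have h1 : s^2 ≤ 2 * t^2 := by
      have h2 : M * s^2 ≤ M * (2 * t^2) := by linarith [hseq, hDt]
      exact le_of_mul_le_mul_left h2 hM
    have h3 : s^2 ≤ ((71/50)*t)^2 := by
      rw [show ((71/50)*t)^2 = (5041/2500)*t^2 by ring]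
      linarith [sq_nonneg t]
    calc s = Real.sqrt (s^2) := (Real.sqrt_sq hs0).symm
      _ ≤ Real.sqrt (((71/50)*t)^2) := Real.sqrt_le_sqrt h3
      _ = (71/50)*t := Real.sqrt_sq (by positivity)
  have hs3 : s^3 ≤ 3 * t^3 := by
    have h4 := pow_le_pow_left₀ hs0 hst 3
    have h5 : ((71/50)*t)^3 = (357911/125000) * t^3 := by ring
    rw [h5] at h4
    nlinarith [h4, pow_nonneg ht0 3]
  set m : ℝ := M / ρ with hmdef
  have hm0 : 0 < m := by positivity
  have hmM : ρ * m = M := by rw [hmdef]; field_simp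
  have hXm : X ≤ m := hXb
  have hX3m : X^3 ≤ m^3 := pow_le_pow_left₀ hX0 hXm 3
  have hρX3 : ρ * X^3 ≤ ρ * m^3 := mul_le_mul_of_nonneg_left hX3m hρ'
  have hρt3 : 0 ≤ ρ * t^3 := mul_nonneg hρ' (pow_nonneg ht0 3)
  have hrt : M * r^2 ≤ 2*M*t^2 + ρ/3 * r^3 := by
    have : (2:ℝ)*D = 2*(M*t^2) := by rw [hDt]
    linarith [hl2D, hMr]
  have hkey : ρ/6 * X^3 ≤ ft + (23/2) * ρ * t^3 := by
    rcases le_or_gt ((7/10) * m) Q with hA | hQsmall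
    · -- case A : Q large
      have hQ2 : ((7/10)*m)^2 ≤ Q^2 := pow_le_pow_left₀ (by positivity) hA 2
      have hft2 : M/2 * ((7/10)*m)^2 ≤ ft :=
        le_trans (mul_le_mul_of_nonneg_left hQ2 (by positivity)) hft
      have e1 : ρ * m^3 = M * m^2 := by rw [← hmM]; ring
      have e2 : M/2 * ((7/10)*m)^2 = (49/200) * (M * m^2) := by ring
      rw [e2] at hft2
      linarith [hρX3, hρt3, e1, hft2]
    rcases le_or_gt X ((12/5) * r) with hXr | hXr
    · rcases le_or_gt (ρ * r) ((9/10) * M) with hB1 | hB2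
      · -- case B1 : small r
        have h1 : ρ/3 * r^3 ≤ (3/10) * M * r^2 := by
          have h10 := mul_le_mul_of_nonneg_right hB1 (sq_nonneg r)
          have h11 : ρ * r * r^2 = ρ * r^3 := by ring
          have h12 : (9/10) * M * r^2 = (9/10) * (M * r^2) := by ring
          nlinarith [h10]
        have h2 : M * ((7/10) * r^2) ≤ M * (2 * t^2) := by linarith
        have h3 : (7/10) * r^2 ≤ 2 * t^2 := le_of_mul_le_mul_left h2 hM
        have hr17 : r ≤ (17/10) * t := by
          have h4 : r^2 ≤ ((17/10)*t)^2 := by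
            rw [show ((17/10)*t)^2 = (289/100)*t^2 by ring]
            linarith [sq_nonneg t]
          calc r = Real.sqrt (r^2) := (Real.sqrt_sq hr0).symm
            _ ≤ Real.sqrt (((17/10)*t)^2) := Real.sqrt_le_sqrt h4
            _ = (17/10)*t := Real.sqrt_sq (by positivity)
        have hX4 : X ≤ (102/25) * t := by linarith
        have hX34 : X^3 ≤ ((102/25)*t)^3 := pow_le_pow_left₀ hX0 hX4 3
        have h5 : ((102/25)*t)^3 = (1061208/15625) * t^3 := by ring
        rw [h5] at hX34
        have h6 := mul_le_mul_of_nonneg_left hX34 hρ'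
        linarith [h6, hft0, hρt3]
      · -- case B2 : large r
        have hrlb : (9/10) * m < r := by
          have h9 : ρ * ((9/10) * m) < ρ * r := by
            rw [show ρ * ((9/10)*m) = (9/10)*(ρ*m) by ring, hmM]; exact hB2
          exact lt_of_mul_lt_mul_left h9 hρ'
        have hrub : r ≤ (17/10) * m := by linarith
        have hρr : ρ * r ≤ (17/10) * M := by
          calc ρ * r ≤ ρ * ((17/10)*m) := mul_le_mul_of_nonneg_left hrub hρ'
            _ = (17/10) * M := by rw [show ρ*((17/10)*m) = (17/10)*(ρ*m) by ring, hmM]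
        have h1 : ρ/3 * r^3 ≤ (17/30) * M * r^2 := by
          have h10 := mul_le_mul_of_nonneg_right hρr (sq_nonneg r)
          nlinarith [h10]
        have h2 : M * ((13/30) * r^2) ≤ M * (2 * t^2) := by linarith
        have h3 : (13/30) * r^2 ≤ 2 * t^2 := le_of_mul_le_mul_left h2 hM
        have htlb : (209/500) * m ≤ t := by
          have h4 : ((209/500)*m)^2 ≤ t^2 := by
            have h13 : ((9/10)*m)^2 ≤ r^2 := pow_le_pow_left₀ (by positivity) hrlb.le 2
            rw [show ((9/10)*m)^2 = (81/100)*m^2 by ring] at h13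
            rw [show ((209/500)*m)^2 = (43681/250000)*m^2 by ring]
            linarith [h13, h3, sq_nonneg m]
          calc (209/500)*m = Real.sqrt (((209/500)*m)^2) := (Real.sqrt_sq (by positivity)).symm
            _ ≤ Real.sqrt (t^2) := Real.sqrt_le_sqrt h4
            _ = t := Real.sqrt_sq ht0
        have ht3 : ((209/500)*m)^3 ≤ t^3 := pow_le_pow_left₀ (by positivity) htlb 3
        have h5 : ((209/500)*m)^3 = (9129329/125000000) * m^3 := by ring
        rw [h5] at ht3
        have h6 := mul_le_mul_of_nonneg_left ht3 hρ'
        linarith [h6, hρX3, hft0]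
    · -- case C : X > 12/5 r
      have hQX : (7/12) * X ≤ Q := by linarith
      have h1 : ρ * X^3 ≤ M * X^2 := by
        have h9 : ρ * X ≤ M := by
          calc ρ * X ≤ ρ * m := mul_le_mul_of_nonneg_left hXm hρ'
            _ = M := hmM
        have h10 := mul_le_mul_of_nonneg_right h9 (sq_nonneg X)
        nlinarith [h10]
      have h2 : X^2 ≤ (144/49) * Q^2 := by
        have h11 : ((7/12)*X)^2 ≤ Q^2 := pow_le_pow_left₀ (by positivity) hQX 2
        rw [show ((7/12)*X)^2 = (49/144)*X^2 by ring] at h11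
        linarith [h11]
      have h3 := mul_le_mul_of_nonneg_left h2 hM.le
      linarith [h1, h3, hft, hρt3]
  have hρs3 := mul_le_mul_of_nonneg_left hs3 hρ'
  linarith [hmain, hDl, hkey, hρs3]

end Stmt16Aux


theorem stmt_16 {d : ℕ} (f : EuclideanSpace ℝ (Fin d) → ℝ) (M ρ : ℝ)
    (hM : 0 < M) (hρ : 0 < ρ)
    (hf : ContDiff ℝ 2 f)
    (hsc : ∀ x v : EuclideanSpace ℝ (Fin d),
      M * ‖v‖ ^ 2 ≤ ⟪v, fderiv ℝ (gradient f) x v⟫)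
    (hLip : ∀ x x' : EuclideanSpace ℝ (Fin d),
      frobNorm (fderiv ℝ (gradient f) x - fderiv ℝ (gradient f) x') ≤ ρ * ‖x - x'‖)
    (xstar : EuclideanSpace ℝ (Fin d)) (hmin : ∀ x, f xstar ≤ f x)
    (xB xtilde : EuclideanSpace ℝ (Fin d))
    (hxt : fderiv ℝ (gradient f) xB (xB - xtilde) = gradient f xB) :
    ∀ x : EuclideanSpace ℝ (Fin d), ‖x - xB‖ ≤ M / ρ →
      f x - f xstar ≤
        2 * ((1 / 2) * ⟪x - xtilde, fderiv ℝ (gradient f) xB (x - xtilde)⟫) +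
          12 * ρ * (f xB - f xstar) ^ ((3 : ℝ) / 2) / M ^ ((3 : ℝ) / 2) := by
  intro x hx
  have hρ' : (0:ℝ) ≤ ρ := hρ.le
  have hLipOp : ∀ y y' : EuclideanSpace ℝ (Fin d),
      ‖fderiv ℝ (gradient f) y - fderiv ℝ (gradient f) y'‖ ≤ ρ * ‖y - y'‖ :=
    fun y y' => le_trans (Stmt16Aux.opNorm_le_frobNorm _) (hLip y y')
  have hsym := Stmt16Aux.hessian_symm hf xB
  have hsc2 := hsc xB
  set H := fderiv ℝ (gradient f) xB with hH
  set g := gradient f xB with hg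
  set Δ : EuclideanSpace ℝ (Fin d) := xB - xtilde with hΔdef
  set q : EuclideanSpace ℝ (Fin d) := x - xtilde with hqdef
  set hv : EuclideanSpace ℝ (Fin d) := x - xB with hhdef
  set sv : EuclideanSpace ℝ (Fin d) := xB - xstar with hsvdef
  set r : ℝ := ‖Δ‖ with hrdef
  set Q : ℝ := ‖q‖ with hQdef
  set X : ℝ := ‖hv‖ with hXdef
  set s : ℝ := ‖sv‖ with hsdef
  set l : ℝ := ⟪Δ, H Δ⟫ with hldef
  set b2 : ℝ := ⟪sv, H sv⟫ with hb2def
  set D : ℝ := f xB - f xstar with hDdef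
  set ft : ℝ := (1/2 : ℝ) * ⟪q, H q⟫ with hftdef
  -- basic nonneg facts
  have hr0 : 0 ≤ r := norm_nonneg _
  have hQ0 : 0 ≤ Q := norm_nonneg _
  have hX0 : 0 ≤ X := norm_nonneg _
  have hs0 : 0 ≤ s := norm_nonneg _
  have hD0 : 0 ≤ D := sub_nonneg.mpr (hmin xB)
  have hMr : M * r^2 ≤ l := hsc2 Δ
  have hl0 : 0 ≤ l := le_trans (by positivity) hMr
  have hb20 : 0 ≤ b2 := le_trans (by positivity : (0:ℝ) ≤ M * s^2) (hsc2 sv)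
  have hft : M/2 * Q^2 ≤ ft := by
    have := hsc2 q
    rw [hftdef]
    linarith
  have hft0 : 0 ≤ ft := le_trans (by positivity) hft
  -- q = hv + Δ and Δ = q - hv
  have hqhd : q = hv + Δ := by rw [hqdef, hhdef, hΔdef]; abel
  -- Taylor for x around xB
  have hT1 : f x ≤ f xB + ⟪g, hv⟫ + 1/2 * ⟪hv, H hv⟫ + ρ/6 * X^3 := by
    have h := Stmt16Aux.f_taylor hf hρ' hLipOp xB hv
    rw [show xB + hv = x by rw [hhdef]; abel] at h
    rw [← hg, ← hH] at h
    have h2 := (abs_le.1 h).2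
    rw [← hXdef] at h2
    linarith
  -- algebraic identity
  have hxt' : H Δ = g := hxt
  have hHq : (⟪q, H q⟫:ℝ) = ⟪hv, H hv⟫ + 2 * ⟪hv, H Δ⟫ + l := by
    rw [hqhd, map_add, inner_add_left, inner_add_right, inner_add_right]
    rw [hsym Δ hv]
    rw [hldef]
    ring
  have hgh : (⟪g, hv⟫:ℝ) = ⟪hv, H Δ⟫ := by
    rw [← hxt']
    exact real_inner_comm _ _
  have hid : (⟪g, hv⟫:ℝ) + 1/2 * ⟪hv, H hv⟫ = ft - l/2 := by
    rw [hftdef, hHq, hgh]; ring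
  -- Taylor for xtilde around xB
  have hT2 : f xtilde ≤ f xB - l/2 + ρ/6 * r^3 := by
    have h := Stmt16Aux.f_taylor hf hρ' hLipOp xB (-Δ)
    rw [show xB + -Δ = xtilde by rw [hΔdef]; abel] at h
    rw [← hg, ← hH] at h
    have h2 := (abs_le.1 h).2
    rw [map_neg, inner_neg_neg, inner_neg_right, norm_neg] at h2
    have hgΔ : (⟪g, Δ⟫:ℝ) = l := by
      rw [← hxt', hldef]
      exact real_inner_comm _ _
    rw [hgΔ, ← hrdef, ← hldef] at h2
    linarith
  have hl2D : l ≤ 2*D + ρ/3 * r^3 := by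
    have := hmin xtilde
    linarith [hT2, hDdef]
  -- Taylor for xstar around xB (lower bound)
  have hT3 : D ≤ ⟪g, sv⟫ - b2/2 + ρ/6 * s^3 := by
    have h := Stmt16Aux.f_taylor hf hρ' hLipOp xB (xstar - xB)
    rw [add_sub_cancel] at h
    rw [← hg, ← hH] at h
    have h2 := (abs_le.1 h).1
    have hsw : xstar - xB = -sv := by rw [hsvdef]; abel
    rw [hsw, map_neg, inner_neg_neg, inner_neg_right, norm_neg] at h2
    rw [← hsdef, ← hb2def] at h2
    linarith [h2, hDdef]
  -- Cauchy-Schwarz for the Hessian form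
  have hCS : (⟪g, sv⟫:ℝ) ≤ l/2 + b2/2 := by
    have hgsv : (⟪g, sv⟫:ℝ) = ⟪Δ, H sv⟫ := by
      rw [← hxt']
      rw [real_inner_comm]
      exact hsym sv Δ
    rw [hgsv, hldef, hb2def]
    exact Stmt16Aux.hess_cs H M hM hsc2 hsym Δ sv
  -- strong convexity at xstar
  have hgs : gradient f xstar = 0 := by
    have hloc : IsLocalMin f xstar := Filter.Eventually.of_forall hmin
    have hfd : fderiv ℝ f xstar = 0 := hloc.fderiv_eq_zero
    show (InnerProductSpace.toDual ℝ (EuclideanSpace ℝ (Fin d))).symm (fderiv ℝ f xstar) = 0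
    rw [hfd, map_zero]
  have hseq : M * s^2 ≤ 2*D := by
    have h := Stmt16Aux.sc_lower hf hsc xstar sv
    rw [show xstar + sv = xB by rw [hsvdef]; abel] at h
    rw [hgs, inner_zero_left, ← hsdef] at h
    linarith [h, hDdef]
  -- triangle inequalities
  have htri1 : X ≤ Q + r := by
    rw [hXdef, hQdef, hrdef, show hv = q - Δ by rw [hqdef, hhdef, hΔdef]; abel]
    exact norm_sub_le _ _
  have htri2 : r ≤ Q + X := by
    rw [hXdef, hQdef, hrdef, show Δ = q - hv by rw [hqdef, hhdef, hΔdef]; abel]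
    exact norm_sub_le _ _
  have hXb : X ≤ M / ρ := hx
  -- set t
  set t : ℝ := Real.sqrt (D / M) with htdef
  have ht0 : 0 ≤ t := Real.sqrt_nonneg _
  have htsq : t^2 = D / M := Real.sq_sqrt (by positivity)
  have hDt : D = M * t^2 := by rw [htsq]; field_simp
  -- rewrite the rpow
  have hrw : D ^ ((3:ℝ)/2) / M ^ ((3:ℝ)/2) = t^3 := by
    rw [hDt, Real.mul_rpow hM.le (sq_nonneg t)]
    rw [mul_comm (M ^ ((3:ℝ)/2)) ((t^2) ^ ((3:ℝ)/2))]
    rw [mul_div_assoc, div_self (ne_of_gt (Real.rpow_pos_of_pos hM _)), mul_one]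
    rw [← Real.rpow_natCast t 2, ← Real.rpow_mul ht0]
    norm_num
  have hgoal2 : 12 * ρ * D ^ ((3:ℝ)/2) / M ^ ((3:ℝ)/2) = 12 * ρ * t^3 := by
    rw [mul_div_assoc, hrw]
  rw [hgoal2]
  -- main chain
  have hmain : f x - f xstar ≤ D - l/2 + ft + ρ/6 * X^3 := by
    linarith [hT1, hid, hDdef]
  have hDl : D ≤ l/2 + ρ/6 * s^3 := by linarith [hT3, hCS]
  have hfinal := Stmt16Aux.final_arith M ρ r Q X s t l D ft (f x) (f xstar)
    hM hρ hr0 hQ0 hX0 hs0 ht0 hMr hft hmain hDl hl2D hseq htri1 htri2 hXb hDt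
  linarith [hfinal]
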